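/- The functions F* and Q* are valid CDFs: F* is nondecreasing with values in [0, 1], and Q* is nondecreasing on [0, B], takes values in [0, 1], and satisfies Q*(B) = 1. -/

import Mathlib

open Set Real

lemma my_hasDeriv (a P C : ℝ) (m : ℕ) (r : ℝ) (hr : 0 < r) (hra : a < r) :
    HasDerivAt (fun x => (x/(x-a))^m * (P + Real.log x - C))
      (((m : ℝ) * (r/(r-a))^(m-1) * ((1*(r-a) - r*1)/(r-a)^2)) * (P + Real.log r - C)
        + (r/(r-a))^m * (0 + r⁻¹ - 0)) r := by
  have hne : r - a ≠ 0 := by intro h; nlinarith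
  have hq : HasDerivAt (fun x : ℝ => x/(x-a)) ((1*(r-a) - r*1)/(r-a)^2) r :=
    (hasDerivAt_id r).div ((hasDerivAt_id r).sub_const a) hne
  have hl : HasDerivAt (fun x : ℝ => P + Real.log x - C) (0 + r⁻¹ - 0) r :=
    ((hasDerivAt_const r P).add (Real.hasDerivAt_log hr.ne')).sub (hasDerivAt_const r C)
  exact (hq.pow m).mul hl

lemma my_mono (a L B P : ℝ) (m : ℕ) (hm : 1 ≤ m) (ha : 0 < a) (haL : a < L)
    (H : ∀ r ∈ Set.Icc L B, (m:ℝ) * a * (P + Real.log r - Real.log L) ≤ r - a) :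
    MonotoneOn (fun r => (r/(r-a))^m * (P + Real.log r - Real.log L)) (Set.Icc L B) := by
  have hL0 : 0 < L := lt_trans ha haL
  apply monotoneOn_of_deriv_nonneg (convex_Icc L B)
  · apply ContinuousOn.mul
    · exact (continuousOn_id.div (continuousOn_id.sub continuousOn_const)
        (fun x hx => by have := hx.1; intro h; simp only [Pi.sub_apply, id] at h; nlinarith)).pow m
    · exact (continuousOn_const.add (continuousOn_id.log
        (fun x hx => by have := hx.1; simp only [id]
                        exact ne_of_gt (lt_of_lt_of_le hL0 this)))).sub continuousOn_const
  · intro x hx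
    rw [interior_Icc] at hx
    have hx0 : 0 < x := lt_trans hL0 hx.1
    exact (my_hasDeriv a P (Real.log L) m x hx0
      (by linarith [hx.1])).differentiableAt.differentiableWithinAt
  · intro x hx
    rw [interior_Icc] at hx
    have hx0 : 0 < x := lt_trans hL0 hx.1
    have hxa : a < x := by linarith [hx.1]
    have hd := my_hasDeriv a P (Real.log L) m x hx0 hxa
    rw [hd.deriv]
    have hkey := H x ⟨hx.1.le, hx.2.le⟩
    have hd0 : 0 < x - a := by linarith
    have hq0 : 0 ≤ x/(x-a) := by positivity
    have hpow : (x/(x-a))^m = (x/(x-a))^(m-1) * (x/(x-a)) := by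
      rw [← pow_succ]; congr 1; omega
    have heq : ((m : ℝ) * (x/(x-a))^(m-1) * ((1*(x-a) - x*1)/(x-a)^2))
          * (P + Real.log x - Real.log L) + (x/(x-a))^m * (0 + x⁻¹ - 0)
        = (x/(x-a))^(m-1)
          * (((x-a) - (m:ℝ)*a*(P + Real.log x - Real.log L))/(x-a)^2) := by
      rw [hpow]; field_simp; ring
    rw [heq]
    exact mul_nonneg (pow_nonneg hq0 _) (div_nonneg (by linarith) (sq_nonneg _))

set_option maxHeartbeats 1600000 in
theorem n_bidder_valid_cdfs (n : ℕ) (hn : 3 ≤ n) (B μ L : ℝ)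
    (hB : 0 < B) (hμ0 : 0 < μ) (hμB : μ < B)
    (hL : L ∈ Set.Ioc (0 : ℝ) B)
    (hLeq : ((n : ℝ) - 1 / ((n : ℝ) - 1) + Real.log (B / L)) * L = ((n : ℝ) - 1) ^ 2 * μ)
    (v₀ a : ℝ) (hv₀ : v₀ = L / ((n : ℝ) - 1)) (ha : a = L / ((n : ℝ) - 1) ^ 2)
    (Fs : ℝ → ℝ)
    (hFs : ∀ v, Fs v = if v < v₀ then 0
      else if v < L then 1 - 1 / ((n : ℝ) - 1) ^ 2
      else if v < B then 1 - a / v else 1)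
    (Qs : ℝ → ℝ)
    (hQs : ∀ r, Qs r = if r < L then
        (1 - a / B) ^ (n - 1) * (L / (L - a)) ^ (n - 1)
          * (((n : ℝ) - 1 - 1 / ((n : ℝ) - 1))
            / ((n : ℝ) - 1 - 1 / ((n : ℝ) - 1) + Real.log (B / L)))
      else (1 - a / B) ^ (n - 1) * (r / (r - a)) ^ (n - 1)
          * (((n : ℝ) - 1 - 1 / ((n : ℝ) - 1) + Real.log (r / L))
            / ((n : ℝ) - 1 - 1 / ((n : ℝ) - 1) + Real.log (B / L)))) :
    Monotone Fs ∧ (∀ v, Fs v ∈ Set.Icc (0 : ℝ) 1) ∧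
    MonotoneOn Qs (Set.Icc 0 B) ∧ (∀ r ∈ Set.Icc (0 : ℝ) B, Qs r ∈ Set.Icc (0 : ℝ) 1) ∧
    Qs B = 1 := by
  obtain ⟨hL0, hLB⟩ := hL
  have hn3 : (3:ℝ) ≤ (n:ℝ) := by exact_mod_cast hn
  have hc : (2:ℝ) ≤ (n:ℝ) - 1 := by linarith
  have hc0 : (0:ℝ) < (n:ℝ) - 1 := by linarith
  have hc20 : (0:ℝ) < ((n:ℝ) - 1)^2 := by positivity
  have ha0 : 0 < a := by rw [ha]; positivity
  have haL : a < L := by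
    rw [ha, div_lt_iff₀ hc20]
    nlinarith [mul_le_mul_of_nonneg_left (show (4:ℝ) ≤ ((n:ℝ)-1)^2 by nlinarith) hL0.le]
  have hv₀0 : 0 < v₀ := by rw [hv₀]; positivity
  have hv₀L : v₀ < L := by
    rw [hv₀, div_lt_iff₀ hc0]
    nlinarith [mul_le_mul_of_nonneg_left hc hL0.le]
  have hav₀ : a < v₀ := by
    rw [ha, hv₀, div_lt_div_iff₀ hc20 hc0]
    nlinarith [mul_le_mul_of_nonneg_left hc hL0.le]
  have haB : a < B := lt_of_lt_of_le haL hLB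
  have haB1 : a / B < 1 := (div_lt_one hB).2 haB
  have haLdiv : a / L = 1 / ((n:ℝ) - 1)^2 := by rw [ha]; field_simp
  have hinvc : 1 / ((n:ℝ) - 1)^2 < 1 := by rw [div_lt_one hc20]; nlinarith
  have hinvc0 : 0 < 1 / ((n:ℝ) - 1)^2 := by positivity
  have hdivle : ∀ u v : ℝ, 0 < u → u ≤ v → a / v ≤ a / u := by
    intro u v hu huv
    exact div_le_div_of_nonneg_left ha0.le hu huv
  have hFmonotone : Monotone Fs := by
    intro x y hxy
    rw [hFs, hFs]
    split_ifs with h1 h2 h3 h4 h5 h6 h7 h8 h9 h10 h11 h12 h13 h14 h15 <;>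
      try linarith
    · have h := hdivle L y hL0 (not_lt.1 h3)
      rw [haLdiv] at h; linarith
    · have h := hdivle L y hL0 (not_lt.1 h7)
      rw [haLdiv] at h; linarith
    · exact sub_le_sub_left (hdivle x y (by linarith [not_lt.1 h5]) hxy) 1
    · have h : 0 < a / x := div_pos ha0 (by linarith [not_lt.1 h5])
      linarith
  have hFrange : ∀ v, Fs v ∈ Set.Icc (0:ℝ) 1 := by
    intro v
    rw [hFs, Set.mem_Icc]
    split_ifs with h1 h2 h3
    · norm_num
    · constructor <;> linarith
    · have hLv : L ≤ v := not_lt.1 h2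
      have h := hdivle L v hL0 hLv
      rw [haLdiv] at h
      have h2' : 0 < a / v := div_pos ha0 (by linarith)
      constructor <;> linarith
    · norm_num
  -- Qs part
  have hP : (0:ℝ) < (n:ℝ) - 1 - 1 / ((n:ℝ) - 1) := by
    have h : 1 / ((n:ℝ) - 1) ≤ 1 / 2 :=
      div_le_div_of_nonneg_left (by norm_num) (by norm_num) hc
    linarith
  have hlogBL : 0 ≤ Real.log (B / L) := Real.log_nonneg ((one_le_div hL0).2 hLB)
  have hD : (0:ℝ) < (n:ℝ) - 1 - 1 / ((n:ℝ) - 1) + Real.log (B / L) := add_pos_of_pos_of_nonneg hP hlogBL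
  have hLa : (0:ℝ) < L - a := by linarith
  have hCB : (0:ℝ) < 1 - a / B := by linarith
  have hCpow : (0:ℝ) ≤ (1 - a/B)^(n-1) := pow_nonneg hCB.le _
  have hm1 : 1 ≤ n - 1 := by omega
  have hmc : ((n - 1 : ℕ) : ℝ) = (n:ℝ) - 1 := by
    rw [Nat.cast_sub (by omega), Nat.cast_one]
  set f : ℝ → ℝ :=
    fun r => (r/(r-a))^(n-1) * (((n:ℝ) - 1 - 1 / ((n:ℝ) - 1)) + Real.log r - Real.log L)
    with hfdef
  have hH : ∀ r ∈ Set.Icc L B,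
      ((n-1:ℕ):ℝ) * a * (((n:ℝ) - 1 - 1 / ((n:ℝ) - 1)) + Real.log r - Real.log L)
        ≤ r - a := by
    intro r hr
    obtain ⟨hr1, hr2⟩ := hr
    have hr0 : 0 < r := lt_of_lt_of_le hL0 hr1
    have hℓ0 : 0 ≤ Real.log r - Real.log L := sub_nonneg.2 (Real.log_le_log hL0 hr1)
    have hℓ : Real.log r - Real.log L ≤ r / L - 1 := by
      have h := Real.log_le_sub_one_of_pos (show (0:ℝ) < r / L by positivity)
      rwa [Real.log_div hr0.ne' hL0.ne'] at h
    have hrL : L * (r / L) = r := by field_simp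
    have hkey : L * (Real.log r - Real.log L) ≤ r - L := by
      have h2 := mul_le_mul_of_nonneg_left hℓ hL0.le
      rw [mul_sub L (r/L) 1, hrL] at h2
      linarith
    rw [hmc, ha]
    have hexp : ((n:ℝ) - 1) * (L / ((n:ℝ) - 1)^2)
          * (((n:ℝ) - 1 - 1 / ((n:ℝ) - 1)) + Real.log r - Real.log L)
        = L - L / ((n:ℝ) - 1)^2 + (L / ((n:ℝ) - 1)) * (Real.log r - Real.log L) := by
      field_simp; ring
    rw [hexp]
    have hLc : L / ((n:ℝ) - 1) ≤ L := by
      rw [div_le_iff₀ hc0]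
      nlinarith
    linarith [mul_le_mul_of_nonneg_right hLc hℓ0]
  have hfmono : MonotoneOn f (Set.Icc L B) :=
    my_mono a L B ((n:ℝ) - 1 - 1 / ((n:ℝ) - 1)) (n-1) hm1 ha0 haL hH
  have hfnonneg : ∀ r, L ≤ r → 0 ≤ f r := by
    intro r hr
    have hr0 : 0 < r := lt_of_lt_of_le hL0 hr
    have hℓ0 : 0 ≤ Real.log r - Real.log L := sub_nonneg.2 (Real.log_le_log hL0 hr)
    apply mul_nonneg
    · apply pow_nonneg; apply div_nonneg hr0.le; linarith
    · linarith
  have hQhigh : ∀ r, L ≤ r → Qs r = (1 - a/B)^(n-1) * f r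
      / ((n:ℝ) - 1 - 1 / ((n:ℝ) - 1) + Real.log (B / L)) := by
    intro r hr
    have hr0 : 0 < r := lt_of_lt_of_le hL0 hr
    rw [hQs, if_neg (not_lt.2 hr), Real.log_div hr0.ne' hL0.ne', hfdef]
    ring
  have hfL : f L = (L/(L-a))^(n-1) * ((n:ℝ) - 1 - 1 / ((n:ℝ) - 1)) := by
    rw [hfdef]; simp
  have hQlow : ∀ r, r < L → Qs r = (1 - a/B)^(n-1) * f L
      / ((n:ℝ) - 1 - 1 / ((n:ℝ) - 1) + Real.log (B / L)) := by
    intro r hr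
    rw [hQs, if_pos hr, hfL]
    ring
  have hQmono : MonotoneOn Qs (Set.Icc 0 B) := by
    intro x hx y hy hxy
    by_cases hyL : y < L
    · have hxL : x < L := lt_of_le_of_lt hxy hyL
      rw [hQlow x hxL, hQlow y hyL]
    · push_neg at hyL
      have hyIcc : y ∈ Set.Icc L B := ⟨hyL, hy.2⟩
      by_cases hxL : x < L
      · rw [hQlow x hxL, hQhigh y hyL]
        have hle : f L ≤ f y := hfmono ⟨le_refl L, hLB⟩ hyIcc hyL
        exact div_le_div_of_nonneg_right (mul_le_mul_of_nonneg_left hle hCpow) hD.le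
      · push_neg at hxL
        rw [hQhigh x hxL, hQhigh y hyL]
        have hle : f x ≤ f y := hfmono ⟨hxL, hx.2⟩ hyIcc hxy
        exact div_le_div_of_nonneg_right (mul_le_mul_of_nonneg_left hle hCpow) hD.le
  have hQB : Qs B = 1 := by
    rw [hQs, if_neg (not_lt.2 hLB)]
    have hBa : B - a ≠ 0 := by linarith
    rw [div_self hD.ne', mul_one, ← mul_pow]
    have h1 : (1 - a/B) * (B/(B-a)) = 1 := by field_simp
    rw [h1, one_pow]
  have hQrange : ∀ r ∈ Set.Icc (0:ℝ) B, Qs r ∈ Set.Icc (0:ℝ) 1 := by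
    intro r hr
    constructor
    · by_cases hrL : r < L
      · rw [hQlow r hrL]
        exact div_nonneg (mul_nonneg hCpow (hfnonneg L (le_refl L))) hD.le
      · push_neg at hrL
        rw [hQhigh r hrL]
        exact div_nonneg (mul_nonneg hCpow (hfnonneg r hrL)) hD.le
    · calc Qs r ≤ Qs B := hQmono hr ⟨hB.le, le_refl B⟩ hr.2
        _ = 1 := hQB
  exact ⟨hFmonotone, hFrange, hQmono, hQrange, hQB⟩
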